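/- Let g_1, …, g_N be nonconstant entire holomorphic functions on ℂ^n, and for a = (a_1, …, a_N) ∈ ℂ^N set g_j^{a_j} := g_j − a_j. Then there exists a dense G_δ set A ⊆ ℂ^N such that for every a ∈ A the following holds: for any choice of n+1 pairwise distinct indices i_1, …, i_{n+1} ∈ {1, …, N}, the intersection of the zero sets Z(g_{i_1}^{a_{i_1}}) ∩ ⋯ ∩ Z(g_{i_{n+1}}^{a_{i_{n+1}}}) is empty. -/

import Mathlib

open Set Topology Manifold Pointwise Metric MvPolynomial

noncomputable section

/-- The polynomial hull of a set `K ⊆ ℂ^n`: the points `z` with `|p(z)| ≤ sup_K |p|` for every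
polynomial `p` in `n` complex variables. -/
def polyHull (n : ℕ) (K : Set (Fin n → ℂ)) : Set (Fin n → ℂ) :=
  {z | ∀ p : MvPolynomial (Fin n) ℂ,
    ‖MvPolynomial.eval z p‖ ≤ sSup ((fun w => ‖MvPolynomial.eval w p‖) '' K)}

/-- A compact set is polynomially convex if it equals its polynomial hull. -/
def PolyConvex (n : ℕ) (K : Set (Fin n → ℂ)) : Prop := polyHull n K = K

/-- `h(K)`: the closure of `K̂ \ K`. -/
def hullRem (n : ℕ) (K : Set (Fin n → ℂ)) : Set (Fin n → ℂ) :=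
  closure (polyHull n K \ K)

/-- A set `S ⊆ ℂ^n` contains an analytic disc: there is a nonconstant holomorphic map from the
unit disc into `ℂ^n` whose image lies in `S`. -/
def ContainsAnalyticDisc {n : ℕ} (S : Set (Fin n → ℂ)) : Prop :=
  ∃ φ : ℂ → (Fin n → ℂ), DifferentiableOn ℂ φ (ball (0 : ℂ) 1) ∧
    (¬ ∃ c, ∀ z ∈ ball (0 : ℂ) 1, φ z = c) ∧
    φ '' ball (0 : ℂ) 1 ⊆ S

section ManifoldDefs

variable {E : Type*} [NormedAddCommGroup E] [NormedSpace ℝ E]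
  {H : Type*} [TopologicalSpace H]
  {M : Type*} [TopologicalSpace M] [ChartedSpace H M]
  {E' : Type*} [NormedAddCommGroup E'] [NormedSpace ℝ E']
  {H' : Type*} [TopologicalSpace H']
  {M' : Type*} [TopologicalSpace M'] [ChartedSpace H' M']

/-- A `C^k` embedding between manifolds: a `C^k` map which is a topological embedding and an
immersion. -/
def IsCkEmbedding (I : ModelWithCorners ℝ E H) (I' : ModelWithCorners ℝ E' H') (k : ℕ∞)
    (f : M → M') : Prop :=
  ContMDiff I I' k f ∧ IsEmbedding f ∧ ∀ x : M, Function.Injective (mfderiv I I' f x)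

/-- The image of the differential `d_x f` of a map `f : M → ℂ^n`, as a real subspace of `ℂ^n`. -/
def mdiffImage {n : ℕ} (I : ModelWithCorners ℝ E H) (f : M → (Fin n → ℂ)) (x : M) :
    Set (Fin n → ℂ) :=
  Set.range (fun v : TangentSpace I x =>
    (mfderiv I (modelWithCornersSelf ℝ (Fin n → ℂ)) f x v : Fin n → ℂ))

/-- A totally real `C^k` embedding `f : M → ℂ^n`: a `C^k` embedding such that at every point the
image of the differential `T` satisfies `T ∩ i·T = {0}`. -/
def IsTotallyRealCkEmbedding {n : ℕ} (I : ModelWithCorners ℝ E H) (k : ℕ∞)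
    (f : M → (Fin n → ℂ)) : Prop :=
  IsCkEmbedding I (modelWithCornersSelf ℝ (Fin n → ℂ)) k f ∧
  ∀ x : M, mdiffImage I f x ∩ (Complex.I • mdiffImage I f x) = {0}

/-- `‖f‖_{C^k(M)} < ε` for a map `f` from a manifold to `ℂ^n`: at every point, in the preferred
chart, all derivatives of order at most `k` have norm `< ε`. -/
def CkNormLt {n : ℕ} (I : ModelWithCorners ℝ E H) (k : ℕ) (f : M → (Fin n → ℂ)) (ε : ℝ) : Prop :=
  ∀ x : M, ∀ i : ℕ, i ≤ k →
    ‖iteratedFDerivWithin ℝ i (f ∘ (extChartAt I x).symm)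
      ((extChartAt I x).target) ((extChartAt I x) x)‖ < ε

end ManifoldDefs

lemma myContinuousFDeriv {n : ℕ} {g : (Fin n → ℂ) → ℂ} (hg : Differentiable ℂ g) :
    Continuous (fderiv ℂ g) := by
  rw [continuous_clm_apply]
  intro v
  rw [Metric.continuous_iff]
  intro z₀ ε hε
  -- uniform continuity on a big compact ball
  have hK : IsCompact (closedBall z₀ (1 + ‖v‖)) := isCompact_closedBall _ _
  have huc : UniformContinuousOn g (closedBall z₀ (1 + ‖v‖)) :=
    hK.uniformContinuousOn_of_continuous hg.continuous.continuousOn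
  rw [Metric.uniformContinuousOn_iff] at huc
  obtain ⟨δ, hδ, hδ'⟩ := huc (ε / 2) (by positivity)
  refine ⟨min δ 1, by positivity, fun z hz => ?_⟩
  have hz1 : dist z z₀ < 1 := hz.trans_le (min_le_right _ _)
  have hzδ : dist z z₀ < δ := hz.trans_le (min_le_left _ _)
  -- the difference function along the complex line through direction v
  set h : ℂ → ℂ := fun w => g (z + w • v) - g (z₀ + w • v) with hh
  have hline : ∀ y : Fin n → ℂ, HasDerivAt (fun w : ℂ => g (y + w • v)) (fderiv ℂ g y v) 0 := by
    intro y
    have h1 : HasDerivAt (fun w : ℂ => y + w • v) v 0 := by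
      simpa using (((hasDerivAt_id (0:ℂ)).smul_const v).const_add y)
    have h2 := (hg (y + (0:ℂ) • v)).hasFDerivAt.comp_hasDerivAt 0 h1
    rw [zero_smul, add_zero] at h2
    exact h2
  have hder : HasDerivAt h (fderiv ℂ g z v - fderiv ℂ g z₀ v) 0 := (hline z).sub (hline z₀)
  have hdiff : Differentiable ℂ h := by
    have : ∀ y : Fin n → ℂ, Differentiable ℂ (fun w : ℂ => g (y + w • v)) := fun y =>
      hg.comp ((differentiable_id.smul_const v).const_add y)
    exact (this z).sub (this z₀)
  have hbound : ∀ w ∈ sphere (0:ℂ) 1, ‖h w‖ ≤ ε / 2 := by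
    intro w hw
    rw [mem_sphere_zero_iff_norm] at hw
    have hmem : ∀ y ∈ closedBall z₀ (1:ℝ), y + w • v ∈ closedBall z₀ (1 + ‖v‖) := by
      intro y hy
      rw [mem_closedBall] at hy ⊢
      calc dist (y + w • v) z₀ ≤ dist (y + w • v) (y) + dist y z₀ := dist_triangle _ _ _
        _ ≤ ‖v‖ + 1 := by
            rw [dist_self_add_left, norm_smul, hw, one_mul]
            exact add_le_add le_rfl hy
        _ = 1 + ‖v‖ := by ring
    have h1 : z + w • v ∈ closedBall z₀ (1 + ‖v‖) :=
      hmem z (mem_closedBall.2 hz1.le)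
    have h2 : z₀ + w • v ∈ closedBall z₀ (1 + ‖v‖) :=
      hmem z₀ (mem_closedBall.2 (by simp))
    have h3 : dist (z + w • v) (z₀ + w • v) < δ := by
      rwa [dist_add_right]
    have := hδ' _ h1 _ h2 h3
    rw [dist_eq_norm] at this
    exact this.le
  have hcauchy := Complex.norm_deriv_le_of_forall_mem_sphere_norm_le one_pos
    (hdiff.diffContOnCl) hbound
  rw [hder.deriv] at hcauchy
  rw [dist_eq_norm]
  calc ‖fderiv ℂ g z v - fderiv ℂ g z₀ v‖ ≤ ε / 2 / 1 := hcauchy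
    _ < ε := by linarith

lemma myContDiff {n : ℕ} {g : (Fin n → ℂ) → ℂ} (hg : Differentiable ℂ g) :
    ContDiff ℂ 1 g :=
  contDiff_one_iff_fderiv.2 ⟨hg, myContinuousFDeriv hg⟩

theorem statement4 {n N : ℕ} (g : Fin N → ((Fin n → ℂ) → ℂ))
    (hg : ∀ j, Differentiable ℂ (g j)) (hgc : ∀ j, ¬ ∃ c : ℂ, ∀ z, g j z = c) :
    ∃ A : Set (Fin N → ℂ), Dense A ∧ IsGδ A ∧
      ∀ a ∈ A, ∀ ι : Fin (n + 1) → Fin N, Function.Injective ι →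
        (⋂ l : Fin (n + 1), {z : Fin n → ℂ | g (ι l) z - a (ι l) = 0}) = ∅ := by
  classical
  -- the map G_ι : ℂ^n → ℂ^{n+1}
  set G : (Fin (n+1) → Fin N) → (Fin n → ℂ) → (Fin (n+1) → ℂ) :=
    fun ι z l => g (ι l) z with hG
  -- bad sets
  set C : ((Fin (n+1) → Fin N) × ℕ) → Set (Fin N → ℂ) := fun p =>
    if Function.Injective p.1 then
      (fun a : Fin N → ℂ => a ∘ p.1) ⁻¹' (G p.1 '' closedBall 0 p.2) else ∅ with hC
  have hGsmooth : ∀ ι, ContDiff ℝ 1 (G ι) := by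
    intro ι
    have h1 : ContDiff ℂ 1 (G ι) := contDiff_pi.2 fun l => myContDiff (hg (ι l))
    exact h1.restrict_scalars ℝ
  have hrange : ∀ ι, interior (range (G ι)) = ∅ := by
    intro ι
    have h2 : Module.finrank ℝ (Fin n → ℂ) < Module.finrank ℝ (Fin (n+1) → ℂ) := by
      simp [Module.finrank_pi_fintype, Complex.finrank_real_complex]
    have := (hGsmooth ι).dense_compl_range_of_finrank_lt_finrank h2
    rwa [← interior_eq_empty_iff_dense_compl] at this
  have hCclosed : ∀ p, IsClosed (C p) := by
    rintro ⟨ι, m⟩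
    simp only [hC]
    split
    · refine IsClosed.preimage ?_ ?_
      · exact Continuous.comp (continuous_pi fun l => continuous_apply (ι l)) continuous_id
      · exact ((isCompact_closedBall _ _).image (hGsmooth ι).continuous).isClosed
    · exact isClosed_empty
  have hCint : ∀ p, interior (C p) = ∅ := by
    rintro ⟨ι, m⟩
    simp only [hC]
    split
    case isTrue hι =>
      by_contra h
      rw [← Set.not_nonempty_iff_eq_empty, not_not] at h
      obtain ⟨a, ha⟩ := h
      -- the projection map as a continuous linear map; it is surjective hence open
      set π : (Fin N → ℂ) →ₗ[ℂ] (Fin (n+1) → ℂ) := LinearMap.funLeft ℂ ℂ ι with hπ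
      have hπs : Function.Surjective π := LinearMap.funLeft_surjective_of_injective ℂ ℂ ι hι
      have hπopen : IsOpenMap π := by
        have := (LinearMap.toContinuousLinearMap π).isOpenMap hπs
        simpa using this
      have h1 : π '' (interior ((fun a : Fin N → ℂ => a ∘ ι) ⁻¹' (G ι '' closedBall 0 m)))
          ⊆ range (G ι) := by
        refine (Set.image_mono (interior_subset)).trans ?_
        rintro x ⟨b, hb, rfl⟩
        exact (Set.image_subset_range _ _) hb
      have h2 : IsOpen (π '' (interior ((fun a : Fin N → ℂ => a ∘ ι) ⁻¹'
          (G ι '' closedBall 0 m)))) := hπopen _ isOpen_interior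
      have h3 : (π '' (interior _)).Nonempty := ⟨π a, a, ha, rfl⟩
      have := interior_maximal h1 h2
      rw [hrange ι] at this
      exact Set.not_nonempty_empty (h3.mono this)
    · simp
  -- A is the complement of the union
  refine ⟨(⋃ p, C p)ᶜ, ?_, ?_, ?_⟩
  · rw [Set.compl_iUnion]
    refine dense_iInter_of_isOpen (fun p => (hCclosed p).isOpen_compl) (fun p => ?_)
    rw [← interior_eq_empty_iff_dense_compl]
    exact hCint p
  · rw [Set.compl_iUnion]
    exact .iInter fun p => (hCclosed p).isOpen_compl.isGδ
  · intro a ha ι hι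
    rw [Set.eq_empty_iff_forall_notMem]
    intro z hz
    simp only [Set.mem_iInter, Set.mem_setOf_eq, sub_eq_zero] at hz
    apply ha
    refine Set.mem_iUnion.2 ⟨(ι, ⌈‖z‖⌉₊), ?_⟩
    simp only [hC, if_pos hι]
    exact ⟨z, by simp [mem_closedBall, Nat.le_ceil, dist_eq_norm], funext fun l => hz l⟩
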